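/- Let α ≥ 2, β ≥ 1, P > 0, R₁ > 0, and 0 < φ ≤ 1/6; set N := P/(β·R₁^α) and R_φ := φ·R₁. Let x be a transmitting node in the Euclidean plane and let Z be a finite set of other transmitting nodes, all distinct from x, such that the total received power at x satisfies Σ_{z ∈ Z} P·dist(z,x)^(−α) ≤ P/(4(β+4)·R_φ)^α. Then for every point y with 0 < dist(x,y) ≤ 2·R_φ, the SINR of x at y satisfies (P·dist(x,y)^(−α)) / (Σ_{z ∈ Z} P·dist(z,y)^(−α) + N) ≥ β; that is, y successfully receives x's message. -/

import Mathlib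

open scoped BigOperators

private lemma rpow_neg_anti {a b α : ℝ} (hb : 0 < b) (hab : b ≤ a) (hα : 0 ≤ α) :
    a ^ (-α) ≤ b ^ (-α) := by
  have ha : 0 < a := hb.trans_le hab
  rw [Real.rpow_neg ha.le, Real.rpow_neg hb.le]
  exact inv_anti₀ (Real.rpow_pos_of_pos hb α) (Real.rpow_le_rpow hb.le hab hα)

private lemma base_le_of_rpow_neg_le {a b α : ℝ} (ha : 0 < a) (hb : 0 < b) (hα : 0 < α)
    (h : a ^ (-α) ≤ b ^ (-α)) : b ≤ a := by
  by_contra hc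
  push_neg at hc
  have : b ^ (-α) < a ^ (-α) := by
    rw [Real.rpow_neg ha.le, Real.rpow_neg hb.le]
    exact inv_strictAnti₀ (Real.rpow_pos_of_pos ha α) (Real.rpow_lt_rpow ha.le hc hα)
  linarith

/-- Low interference at the sender implies successful local broadcast: with uniform power
`P`, noise `N = P/(β·R₁^α)`, broadcasting radius `R_φ = φ·R₁` for `0 < φ ≤ 1/6`, if the
total received power at the sender `x` from the other transmitters `Z` is at most
`P/(4(β+4)·R_φ)^α`, then every point `y` with `0 < dist(x,y) ≤ 2·R_φ` receives `x`'s
message, i.e. the SINR of `x` at `y` is at least `β`. -/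
theorem stmt_11 (α β P R₁ φ : ℝ) (hα : 2 ≤ α) (hβ : 1 ≤ β) (hP : 0 < P)
    (hR₁ : 0 < R₁) (hφ0 : 0 < φ) (hφ : φ ≤ 1 / 6)
    (x : EuclideanSpace ℝ (Fin 2)) (Z : Finset (EuclideanSpace ℝ (Fin 2)))
    (hZx : ∀ z ∈ Z, z ≠ x)
    (hI : ∑ z ∈ Z, P * dist z x ^ (-α) ≤ P / (4 * (β + 4) * (φ * R₁)) ^ α)
    (y : EuclideanSpace ℝ (Fin 2)) (hy0 : 0 < dist x y) (hy : dist x y ≤ 2 * (φ * R₁)) :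
    β ≤ (P * dist x y ^ (-α)) /
        ((∑ z ∈ Z, P * dist z y ^ (-α)) + P / (β * R₁ ^ α)) := by
  have hα0 : (0:ℝ) < α := by linarith
  have hβ0 : (0:ℝ) < β := by linarith
  have hRφ : 0 < φ * R₁ := mul_pos hφ0 hR₁
  set Rφ := φ * R₁ with hRφdef
  have hK0 : 0 < 4 * (β + 4) * Rφ := by nlinarith
  set K := 4 * (β + 4) * Rφ with hKdef
  -- every z is far from x, hence not too close to y
  have hfar : ∀ z ∈ Z, K ≤ dist z x := by
    intro z hz
    have hzx : 0 < dist z x := dist_pos.2 (hZx z hz)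
    have hterm : P * dist z x ^ (-α) ≤ P / K ^ α := by
      refine le_trans ?_ hI
      exact Finset.single_le_sum (f := fun w => P * dist w x ^ (-α))
        (fun w _ => by positivity) hz
    have : dist z x ^ (-α) ≤ K ^ (-α) := by
      rw [Real.rpow_neg hK0.le]
      rw [div_eq_mul_inv] at hterm
      exact le_of_mul_le_mul_left hterm hP
    exact base_le_of_rpow_neg_le hzx hK0 hα0 this
  have hZy : ∀ z ∈ Z, dist z x / 2 ≤ dist z y := by
    intro z hz
    have h1 := hfar z hz
    have h2 : dist z x ≤ dist z y + dist y x := dist_triangle z y x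
    have h3 : dist y x = dist x y := dist_comm y x
    have h4 : 2 * Rφ ≤ K / 2 := by
      rw [hKdef]; nlinarith
    nlinarith [hy]
  -- interference bound at y
  have hIy : (∑ z ∈ Z, P * dist z y ^ (-α)) ≤ P / ((β + 4) ^ α * (2 * Rφ) ^ α) := by
    have hsum : (∑ z ∈ Z, P * dist z y ^ (-α)) ≤
        ∑ z ∈ Z, (2:ℝ) ^ α * (P * dist z x ^ (-α)) := by
      refine Finset.sum_le_sum fun z hz => ?_
      have hzx : 0 < dist z x := dist_pos.2 (hZx z hz)
      have hhalf : 0 < dist z x / 2 := by linarith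
      have h1 : dist z y ^ (-α) ≤ (dist z x / 2) ^ (-α) :=
        rpow_neg_anti hhalf (hZy z hz) hα0.le
      have h2 : (dist z x / 2) ^ (-α) = 2 ^ α * dist z x ^ (-α) := by
        rw [Real.div_rpow dist_nonneg (by norm_num : (0:ℝ) ≤ 2),
          Real.rpow_neg (by norm_num : (0:ℝ) ≤ 2)]
        field_simp [mul_comm]
      calc P * dist z y ^ (-α) ≤ P * ((dist z x / 2) ^ (-α)) := by
            exact mul_le_mul_of_nonneg_left h1 hP.le
        _ = 2 ^ α * (P * dist z x ^ (-α)) := by rw [h2]; ring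
    have h2K : (2:ℝ) ^ α * (P / K ^ α) = P / ((β + 4) ^ α * (2 * Rφ) ^ α) := by
      have hK2 : K = 2 * ((β + 4) * (2 * Rφ)) := by rw [hKdef]; ring
      rw [hK2, Real.mul_rpow (by norm_num) (by nlinarith),
        Real.mul_rpow (by linarith) (by linarith)]
      have h2p : (0:ℝ) < (2:ℝ) ^ α := Real.rpow_pos_of_pos (by norm_num) α
      field_simp
    calc (∑ z ∈ Z, P * dist z y ^ (-α)) ≤ ∑ z ∈ Z, (2:ℝ) ^ α * (P * dist z x ^ (-α)) := hsum
      _ = (2:ℝ) ^ α * ∑ z ∈ Z, P * dist z x ^ (-α) := (Finset.mul_sum _ _ _).symm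
      _ ≤ (2:ℝ) ^ α * (P / K ^ α) := by
          exact mul_le_mul_of_nonneg_left hI (Real.rpow_pos_of_pos (by norm_num) α).le
      _ = P / ((β + 4) ^ α * (2 * Rφ) ^ α) := h2K
  -- denominators
  have hT : 0 < (2 * Rφ) ^ α := Real.rpow_pos_of_pos (by linarith) α
  have hB4 : 0 < (β + 4) ^ α := Real.rpow_pos_of_pos (by linarith) α
  have hR1a : 0 < R₁ ^ α := Real.rpow_pos_of_pos hR₁ α
  have hIy0 : 0 ≤ ∑ z ∈ Z, P * dist z y ^ (-α) := by
    refine Finset.sum_nonneg fun z _ => ?_; positivity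
  have hN : 0 < P / (β * R₁ ^ α) := by positivity
  have hD : 0 < (∑ z ∈ Z, P * dist z y ^ (-α)) + P / (β * R₁ ^ α) := by linarith
  rw [le_div_iff₀ hD]
  -- key numeric bounds
  have h16 : 16 * β ≤ (β + 4) ^ α := by
    have h1 : (β + 4) ^ (2:ℝ) ≤ (β + 4) ^ α :=
      Real.rpow_le_rpow_of_exponent_le (by linarith) hα
    have h2 : (β + 4) ^ (2:ℝ) = (β + 4) ^ (2:ℕ) := by
      rw [← Real.rpow_natCast]; norm_num
    rw [h2] at h1
    nlinarith [sq_nonneg (β - 4)]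
  have h9 : 9 * (2 * Rφ) ^ α ≤ R₁ ^ α := by
    have h1 : (2 * Rφ) ^ α ≤ (R₁ / 3) ^ α := by
      apply Real.rpow_le_rpow (by linarith) (by rw [hRφdef]; nlinarith) hα0.le
    have h2 : ((3:ℝ)) ^ (2:ℝ) ≤ (3:ℝ) ^ α :=
      Real.rpow_le_rpow_of_exponent_le (by norm_num) hα
    have h3 : ((3:ℝ)) ^ (2:ℝ) = 9 := by
      rw [show (2:ℝ) = ((2:ℕ):ℝ) by norm_num, Real.rpow_natCast]; norm_num
    have h4 : (R₁ / 3) ^ α = R₁ ^ α / 3 ^ α := Real.div_rpow hR₁.le (by norm_num : (0:ℝ) ≤ 3) α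
    have h3p : (0:ℝ) < (3:ℝ) ^ α := Real.rpow_pos_of_pos (by norm_num) α
    rw [h4] at h1
    rw [h3] at h2
    calc 9 * (2 * Rφ) ^ α ≤ 9 * (R₁ ^ α / 3 ^ α) := by linarith
      _ ≤ 3 ^ α * (R₁ ^ α / 3 ^ α) := by
          apply mul_le_mul_of_nonneg_right h2; positivity
      _ = R₁ ^ α := by field_simp
  have hdT : P / (2 * Rφ) ^ α ≤ P * dist x y ^ (-α) := by
    have h1 : dist x y ^ α ≤ (2 * Rφ) ^ α := Real.rpow_le_rpow dist_nonneg hy hα0.le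
    rw [Real.rpow_neg dist_nonneg, ← div_eq_mul_inv]
    exact div_le_div_of_nonneg_left hP.le (Real.rpow_pos_of_pos hy0 α) h1
  -- assemble
  set S := ∑ z ∈ Z, P * dist z y ^ (-α) with hSdef
  set T := (2 * Rφ) ^ α with hTdef
  have e1 : β * S ≤ (1/16) * (P / T) := by
    have hb : β / (β + 4) ^ α ≤ 1 / 16 := by
      rw [div_le_div_iff₀ hB4 (by norm_num)]; linarith
    calc β * S ≤ β * (P / ((β + 4) ^ α * T)) := mul_le_mul_of_nonneg_left hIy hβ0.le
      _ = (β / (β + 4) ^ α) * (P / T) := by field_simp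
      _ ≤ (1/16) * (P / T) := by
          apply mul_le_mul_of_nonneg_right hb; positivity
  have e2 : β * (P / (β * R₁ ^ α)) ≤ (1/9) * (P / T) := by
    have hbn : β * (P / (β * R₁ ^ α)) = P / R₁ ^ α := by field_simp
    have h9T : 0 < 9 * T := by linarith
    have : P / R₁ ^ α ≤ P / (9 * T) :=
      div_le_div_of_nonneg_left hP.le h9T h9
    rw [hbn]
    calc P / R₁ ^ α ≤ P / (9 * T) := this
      _ = (1/9) * (P / T) := by field_simp
  have e4 : 0 ≤ P / T := by positivity
  calc β * (S + P / (β * R₁ ^ α)) = β * S + β * (P / (β * R₁ ^ α)) := by ring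
    _ ≤ (1/16) * (P / T) + (1/9) * (P / T) := by linarith
    _ ≤ P / T := by linarith
    _ ≤ P * dist x y ^ (-α) := hdT
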